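/- arXiv:1405.5601 — 2 statements merged into one kernel-verified Lean document; each statement's English description precedes it below -/
import Mathlib

section
/- The set S = {(b^m a b^j, b^{n-2-j}) : 0 ≤ j ≤ n-2} ∪ {(ε, b^m a b^{n-2})} is an extended fooling set (in the cover-automaton sense) for L = {a,b}^{≤m} a {a,b}^{n-2}, hence every NFA cover automaton for L has at least n states. -/
/-- `A` is an NFA cover automaton for `L` with length bound `l`. -/
def IsCoverN {α σ : Type*} (A : NFA α σ) (L : Language α) (l : ℕ) : Prop :=
  ∀ w : List α, w.length ≤ l → (w ∈ A.accepts ↔ w ∈ L)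

/-- The language `{a,b}^{≤m} a {a,b}^{n-2}` over `Bool` (`true` = a, `false` = b). -/
def Lmn (m n : ℕ) : Language Bool :=
  {w | ∃ u v : List Bool, w = u ++ [true] ++ v ∧ u.length ≤ m ∧ v.length = n - 2}

/-- Left components of the fooling set `S`:
`b^m a b^j` for `0 ≤ j ≤ n-2`, and `ε` for the last index. -/
def xS (m n : ℕ) (i : Fin n) : List Bool :=
  if (i : ℕ) ≤ n - 2 then
    List.replicate m false ++ [true] ++ List.replicate (i : ℕ) false
  else []

/-- Right components of the fooling set `S`:
`b^{n-2-j}` for `0 ≤ j ≤ n-2`, and `b^m a b^{n-2}` for the last index. -/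
def yS (m n : ℕ) (i : Fin n) : List Bool :=
  if (i : ℕ) ≤ n - 2 then List.replicate (n - 2 - (i : ℕ)) false
  else List.replicate m false ++ [true] ++ List.replicate (n - 2) false

section Helpers

lemma evalFrom_split' {α σ : Type*} (M : NFA α σ) (S : Set σ) (y : List α) :
    M.evalFrom S y = ⋃ t ∈ S, M.evalFrom {t} y := by
  induction y generalizing S with
  | nil => simp [NFA.evalFrom]
  | cons a y ih =>
    have h1 : ∀ T : Set σ, M.evalFrom T (a :: y) = M.evalFrom (M.stepSet T a) y := fun T => rfl
    rw [h1, ih]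
    ext s
    simp only [Set.mem_iUnion, h1, NFA.mem_stepSet, exists_prop]
    constructor
    · rintro ⟨t, ⟨u, hu, ht⟩, hs⟩
      refine ⟨u, hu, ?_⟩
      rw [ih]
      exact Set.mem_iUnion₂.2 ⟨t, by simpa [NFA.mem_stepSet] using ht, hs⟩
    · rintro ⟨u, hu, hs⟩
      rw [ih] at hs
      obtain ⟨t, ht, hs⟩ := Set.mem_iUnion₂.1 hs
      exact ⟨t, ⟨u, hu, by simpa [NFA.mem_stepSet] using ht⟩, hs⟩

lemma evalFrom_append' {α σ : Type*} (M : NFA α σ) (S : Set σ) (x y : List α) :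
    M.evalFrom S (x ++ y) = M.evalFrom (M.evalFrom S x) y :=
  List.foldl_append

lemma decomp' : ∀ (u : List Bool) (p : ℕ) (q : ℕ) (v : List Bool),
    u ++ true :: v = List.replicate p false ++ true :: List.replicate q false →
    u.length = p ∧ v.length = q := by
  intro u
  induction u with
  | nil =>
    intro p q v h
    cases p with
    | zero => simp_all
    | succ p => simp [List.replicate_succ] at h
  | cons a u ih =>
    intro p q v h
    cases p with
    | zero =>
      simp only [List.replicate, List.nil_append, List.cons_append, List.cons.injEq] at h
      have : true ∈ List.replicate q false := h.2 ▸ (by simp)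
      simp [List.mem_replicate] at this
    | succ p =>
      simp only [List.replicate_succ, List.cons_append, List.cons.injEq] at h
      have := ih p q v h.2
      simp [this.1, this.2]

lemma not_mem_wrong (m n p t : ℕ) (ht : t ≠ n - 2) :
    List.replicate p false ++ true :: List.replicate t false ∉ Lmn m n := by
  rintro ⟨u, v, h, hu, hv⟩
  have h' : u ++ true :: v = List.replicate p false ++ true :: List.replicate t false := by
    rw [h]; simp
  obtain ⟨-, h2⟩ := decomp' u p t v h'
  omega

lemma not_mem_false (m n k : ℕ) (hn : 2 ≤ n) : List.replicate k false ∉ Lmn m n := by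
  rintro ⟨u, v, h, -, -⟩
  have : true ∈ List.replicate k false := by rw [h]; simp
  simp [List.mem_replicate] at this

lemma fooling_bound {σ : Type} [Fintype σ] (A : NFA Bool σ) (L : Language Bool) (l k : ℕ)
    (hA : IsCoverN A L l) (x y : Fin k → List Bool)
    (hlen : ∀ i, (x i ++ y i).length ≤ l)
    (hmem : ∀ i, x i ++ y i ∈ L)
    (hf : ∀ i j, i ≠ j →
      ((x i ++ y j).length ≤ l ∧ x i ++ y j ∉ L) ∨
      ((x j ++ y i).length ≤ l ∧ x j ++ y i ∉ L)) :
    k ≤ Fintype.card σ := by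
  have hacc : ∀ i, x i ++ y i ∈ A.accepts := fun i => (hA _ (hlen i)).2 (hmem i)
  have hex : ∀ i, ∃ t, t ∈ A.evalFrom A.start (x i) ∧
      ∃ s ∈ A.accept, s ∈ A.evalFrom {t} (y i) := by
    intro i
    obtain ⟨s, hs, hseval⟩ := (NFA.mem_accepts (M := A)).1 (hacc i)
    rw [evalFrom_append', evalFrom_split'] at hseval
    obtain ⟨t, ht, hst⟩ := Set.mem_iUnion₂.1 hseval
    exact ⟨t, ht, s, hs, hst⟩
  choose f hf1 hf2 using hex
  have key : ∀ a b : Fin k, f a = f b → x a ++ y b ∈ A.accepts := by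
    intro a b hab
    obtain ⟨s, hs, hst⟩ := hf2 b
    refine (NFA.mem_accepts (M := A)).2 ⟨s, hs, ?_⟩
    rw [evalFrom_append', evalFrom_split']
    exact Set.mem_iUnion₂.2 ⟨f a, hf1 a, by rw [hab]; exact hst⟩
  have inj : Function.Injective f := by
    intro i j hij
    by_contra hne
    rcases hf i j hne with ⟨hl, hnL⟩ | ⟨hl, hnL⟩
    · exact hnL ((hA _ hl).1 (key i j hij))
    · exact hnL ((hA _ hl).1 (key j i hij.symm))
  simpa using Fintype.card_le_of_injective f inj

end Helpers

/-- `S = {(b^m a b^j, b^{n-2-j}) : 0 ≤ j ≤ n-2} ∪ {(ε, b^m a b^{n-2})}`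
is an extended fooling set in the cover-automaton sense for
`L = {a,b}^{≤m} a {a,b}^{n-2}` (with `l = m+n-1`), hence every NFA cover
automaton for `L` has at least `n` states. -/
theorem extended_fooling_set_Lmn (m n : ℕ) (hm : 1 ≤ m) (hn : 2 ≤ n) :
    (∀ i : Fin n, xS m n i ++ yS m n i ∈ Lmn m n) ∧
    (∀ i j : Fin n, i ≠ j →
      ((xS m n i ++ yS m n j).length ≤ m + n - 1 ∧ xS m n i ++ yS m n j ∉ Lmn m n) ∨
      ((xS m n j ++ yS m n i).length ≤ m + n - 1 ∧ xS m n j ++ yS m n i ∉ Lmn m n)) ∧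
    (∀ (σ : Type) [Fintype σ] (A : NFA Bool σ),
      IsCoverN A (Lmn m n) (m + n - 1) → n ≤ Fintype.card σ) := by
  -- part 1: membership
  have part1 : ∀ i : Fin n, xS m n i ++ yS m n i ∈ Lmn m n := by
    intro i
    by_cases h : (i : ℕ) ≤ n - 2
    · refine ⟨List.replicate m false,
        List.replicate (i : ℕ) false ++ List.replicate (n - 2 - (i : ℕ)) false, ?_, by simp, ?_⟩
      · simp [xS, yS, h]
      · simp; omega
    · refine ⟨List.replicate m false, List.replicate (n - 2) false, ?_, by simp, by simp⟩
      simp [xS, yS, h]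
  -- concat shape when both indices small
  have shape : ∀ i j : Fin n, (i : ℕ) ≤ n - 2 → (j : ℕ) ≤ n - 2 →
      xS m n i ++ yS m n j =
        List.replicate m false ++ true ::
          List.replicate ((i : ℕ) + (n - 2 - (j : ℕ))) false := by
    intro i j hi hj
    simp only [xS, yS, if_pos hi, if_pos hj, List.append_assoc, List.singleton_append,
      List.cons_append, List.nil_append, ← List.replicate_add]
  have part2 : ∀ i j : Fin n, i ≠ j →
      ((xS m n i ++ yS m n j).length ≤ m + n - 1 ∧ xS m n i ++ yS m n j ∉ Lmn m n) ∨
      ((xS m n j ++ yS m n i).length ≤ m + n - 1 ∧ xS m n j ++ yS m n i ∉ Lmn m n) := by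
    intro i j hij
    have hilt : (i : ℕ) < n := i.isLt
    have hjlt : (j : ℕ) < n := j.isLt
    have hijne : (i : ℕ) ≠ (j : ℕ) := fun h => hij (Fin.ext h)
    by_cases hi : (i : ℕ) ≤ n - 2 <;> by_cases hj : (j : ℕ) ≤ n - 2
    · -- both small
      rcases lt_or_gt_of_ne hijne with hlt | hgt
      · left
        rw [shape i j hi hj]
        constructor
        · simp; omega
        · exact not_mem_wrong m n m _ (by omega)
      · right
        rw [shape j i hj hi]
        constructor
        · simp; omega
        · exact not_mem_wrong m n m _ (by omega)
    · -- i small, j = n-1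
      right
      have hx : xS m n j ++ yS m n i = List.replicate (n - 2 - (i : ℕ)) false := by
        simp [xS, yS, hi, hj]
      rw [hx]
      exact ⟨by simp; omega, not_mem_false m n _ hn⟩
    · -- j small, i = n-1
      left
      have hx : xS m n i ++ yS m n j = List.replicate (n - 2 - (j : ℕ)) false := by
        simp [xS, yS, hi, hj]
      rw [hx]
      exact ⟨by simp; omega, not_mem_false m n _ hn⟩
    · omega
  refine ⟨part1, part2, ?_⟩
  intro σ _ A hA
  refine fooling_bound A (Lmn m n) (m + n - 1) n hA (xS m n) (yS m n) ?_ part1 part2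
  intro i
  by_cases h : (i : ℕ) ≤ n - 2
  · rw [shape i i h h]; simp; omega
  · simp [xS, yS, h]; omega
end

section
/- There exists an NFA cover automaton A for a finite language L and states p ≠ q with level(p), level(q) ≤ l such that x_A(p) ∼_L x_A(q) (the minimal words reaching p and q are similar w.r.t. L) but merging p and q (in either the weak or strong sense) does not preserve the cover property. -/
/-- The level of a state: the length of a shortest word reaching it
(`⊤` if it is unreachable). -/
noncomputable def nfaLevel {α σ : Type*} (A : NFA α σ) (s : σ) : ℕ∞ :=
  ⨅ w ∈ {w : List α | s ∈ A.eval w}, (w.length : ℕ∞)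

/-- Acceptance of a word starting from the single state `s`. -/
def AccFrom {α σ : Type*} (A : NFA α σ) (s : σ) (w : List α) : Prop :=
  ∃ f ∈ A.evalFrom {s} w, f ∈ A.accept

/-- Similarity of states `p ∼_A q` in a cover automaton with length bound `l`:
acceptance from `p` and from `q` agree on all words of length at most
`l - max(level(p), level(q))`. -/
def StateSim {α σ : Type*} (A : NFA α σ) (l : ℕ) (p q : σ) : Prop :=
  ∀ w : List α,
    (w.length : ℕ∞) ≤ (l : ℕ∞) - max (nfaLevel A p) (nfaLevel A q) →
    (AccFrom A p w ↔ AccFrom A q w)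

/-- Strong merge of state `q` into state `p`: transitions entering `q` are
redirected to `p`, and `q` (with its outgoing transitions) is deleted. -/
def strongMerge {α σ : Type*} (A : NFA α σ) (p q : σ) : NFA α {s : σ // s ≠ q} where
  step := fun s a => {t | (t : σ) ∈ A.step s.1 a ∨ ((t : σ) = p ∧ q ∈ A.step s.1 a)}
  start := {s | (s : σ) ∈ A.start ∨ ((s : σ) = p ∧ q ∈ A.start)}
  accept := {s | (s : σ) ∈ A.accept}

/-- Weak merge of state `q` into state `p`: `q` is collapsed onto `p`,
consolidating both its incoming and its outgoing transitions. -/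
def weakMerge {α σ : Type*} [DecidableEq σ] (A : NFA α σ) (p q : σ) :
    NFA α {s : σ // s ≠ q} where
  step := fun s a =>
    if (s : σ) = p then
      {t | (t : σ) ∈ A.step p a ∨ (t : σ) ∈ A.step q a ∨
        ((t : σ) = p ∧ (q ∈ A.step p a ∨ q ∈ A.step q a))}
    else
      {t | (t : σ) ∈ A.step s.1 a ∨ ((t : σ) = p ∧ q ∈ A.step s.1 a)}
  start := {s | (s : σ) ∈ A.start ∨ ((s : σ) = p ∧ q ∈ A.start)}
  accept := {s | (s : σ) ∈ A.accept}

/-- Similarity of words with respect to `L` with length bound `l`. -/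
def WordSim {α : Type*} (L : Language α) (l : ℕ) (x y : List α) : Prop :=
  ∀ w : List α, w.length ≤ l - max x.length y.length → ((x ++ w) ∈ L ↔ (y ++ w) ∈ L)

section Witness

def tf : Fin 6 → Fin 6 → Bool
  | 0, t => t = 1 || t = 3
  | 1, t => t = 2
  | 2, t => t = 1
  | 3, t => t = 4
  | 4, t => t = 5
  | 5, t => t = 3

def myA : NFA Unit (Fin 6) where
  step s _ := {t | tf s t}
  start := {s | s = 0}
  accept := {s | s = 2 ∨ s = 4 ∨ s = 5}

def Lw : Language Unit := {w | 2 ≤ w.length ∧ w.length ≤ 10 ∧ w.length ≠ 7}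

lemma unit_list (w : List Unit) : w = List.replicate w.length () := by
  induction w with
  | nil => rfl
  | cons a t ih => cases a; simpa [List.replicate_succ] using ih

lemma eval_succ {σ : Type*} (M : NFA Unit σ) (n : ℕ) :
    M.eval (List.replicate (n + 1) ()) = M.stepSet (M.eval (List.replicate n ())) () := by
  rw [List.replicate_succ', NFA.eval_append_singleton]

lemma mem_acc_iff {σ : Type*} (M : NFA Unit σ) (w : List Unit) (S : Set σ)
    (h : M.eval w = S) : w ∈ M.accepts ↔ ∃ t ∈ M.accept, t ∈ S := by
  rw [← h]; rfl

lemma mem_eval_succ {σ : Type*} (M : NFA Unit σ) {n : ℕ} {b c : σ}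
    (hb : b ∈ M.eval (List.replicate n ())) (hc : c ∈ M.step b ()) :
    c ∈ M.eval (List.replicate (n + 1) ()) := by
  rw [eval_succ]; exact NFA.mem_stepSet.2 ⟨b, hb, hc⟩

lemma lw_mem (n : ℕ) : List.replicate n () ∈ Lw ↔ (2 ≤ n ∧ n ≤ 10 ∧ n ≠ 7) := by
  change 2 ≤ (List.replicate n ()).length ∧ (List.replicate n ()).length ≤ 10 ∧
    (List.replicate n ()).length ≠ 7 ↔ _
  rw [List.length_replicate]

lemma eA0 : myA.eval (List.replicate 0 ()) = {s : Fin 6 | s = 0} := rfl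
lemma eA1 : myA.eval (List.replicate 1 ()) = {s : Fin 6 | s = 1 ∨ s = 3} := by
  rw [show List.replicate 1 () = List.replicate 0 () ++ [()] from List.replicate_succ',
    NFA.eval_append_singleton, eA0]
  ext t; simp only [NFA.stepSet, myA, Set.mem_iUnion, Set.mem_setOf_eq]; revert t; decide
lemma eA2 : myA.eval (List.replicate 2 ()) = {s : Fin 6 | s = 2 ∨ s = 4} := by
  rw [show List.replicate 2 () = List.replicate 1 () ++ [()] from List.replicate_succ',
    NFA.eval_append_singleton, eA1]
  ext t; simp only [NFA.stepSet, myA, Set.mem_iUnion, Set.mem_setOf_eq]; revert t; decide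
lemma eA3 : myA.eval (List.replicate 3 ()) = {s : Fin 6 | s = 1 ∨ s = 5} := by
  rw [show List.replicate 3 () = List.replicate 2 () ++ [()] from List.replicate_succ',
    NFA.eval_append_singleton, eA2]
  ext t; simp only [NFA.stepSet, myA, Set.mem_iUnion, Set.mem_setOf_eq]; revert t; decide
lemma eA4 : myA.eval (List.replicate 4 ()) = {s : Fin 6 | s = 2 ∨ s = 3} := by
  rw [show List.replicate 4 () = List.replicate 3 () ++ [()] from List.replicate_succ',
    NFA.eval_append_singleton, eA3]
  ext t; simp only [NFA.stepSet, myA, Set.mem_iUnion, Set.mem_setOf_eq]; revert t; decide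
lemma eA5 : myA.eval (List.replicate 5 ()) = {s : Fin 6 | s = 1 ∨ s = 4} := by
  rw [show List.replicate 5 () = List.replicate 4 () ++ [()] from List.replicate_succ',
    NFA.eval_append_singleton, eA4]
  ext t; simp only [NFA.stepSet, myA, Set.mem_iUnion, Set.mem_setOf_eq]; revert t; decide
lemma eA6 : myA.eval (List.replicate 6 ()) = {s : Fin 6 | s = 2 ∨ s = 5} := by
  rw [show List.replicate 6 () = List.replicate 5 () ++ [()] from List.replicate_succ',
    NFA.eval_append_singleton, eA5]
  ext t; simp only [NFA.stepSet, myA, Set.mem_iUnion, Set.mem_setOf_eq]; revert t; decide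
lemma eA7 : myA.eval (List.replicate 7 ()) = {s : Fin 6 | s = 1 ∨ s = 3} := by
  rw [show List.replicate 7 () = List.replicate 6 () ++ [()] from List.replicate_succ',
    NFA.eval_append_singleton, eA6]
  ext t; simp only [NFA.stepSet, myA, Set.mem_iUnion, Set.mem_setOf_eq]; revert t; decide
lemma eA8 : myA.eval (List.replicate 8 ()) = {s : Fin 6 | s = 2 ∨ s = 4} := by
  rw [show List.replicate 8 () = List.replicate 7 () ++ [()] from List.replicate_succ',
    NFA.eval_append_singleton, eA7]
  ext t; simp only [NFA.stepSet, myA, Set.mem_iUnion, Set.mem_setOf_eq]; revert t; decide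
lemma eA9 : myA.eval (List.replicate 9 ()) = {s : Fin 6 | s = 1 ∨ s = 5} := by
  rw [show List.replicate 9 () = List.replicate 8 () ++ [()] from List.replicate_succ',
    NFA.eval_append_singleton, eA8]
  ext t; simp only [NFA.stepSet, myA, Set.mem_iUnion, Set.mem_setOf_eq]; revert t; decide
lemma eA10 : myA.eval (List.replicate 10 ()) = {s : Fin 6 | s = 2 ∨ s = 3} := by
  rw [show List.replicate 10 () = List.replicate 9 () ++ [()] from List.replicate_succ',
    NFA.eval_append_singleton, eA9]
  ext t; simp only [NFA.stepSet, myA, Set.mem_iUnion, Set.mem_setOf_eq]; revert t; decide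

lemma coverA : IsCoverN myA Lw 10 := by
  intro w hw
  rw [unit_list w]
  revert hw
  generalize w.length = n
  intro hn
  interval_cases n
  · rw [mem_acc_iff _ _ _ eA0, lw_mem]
    simp only [myA, Set.mem_setOf_eq]
    decide
  · rw [mem_acc_iff _ _ _ eA1, lw_mem]
    simp only [myA, Set.mem_setOf_eq]
    decide
  · rw [mem_acc_iff _ _ _ eA2, lw_mem]
    simp only [myA, Set.mem_setOf_eq]
    decide
  · rw [mem_acc_iff _ _ _ eA3, lw_mem]
    simp only [myA, Set.mem_setOf_eq]
    decide
  · rw [mem_acc_iff _ _ _ eA4, lw_mem]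
    simp only [myA, Set.mem_setOf_eq]
    decide
  · rw [mem_acc_iff _ _ _ eA5, lw_mem]
    simp only [myA, Set.mem_setOf_eq]
    decide
  · rw [mem_acc_iff _ _ _ eA6, lw_mem]
    simp only [myA, Set.mem_setOf_eq]
    decide
  · rw [mem_acc_iff _ _ _ eA7, lw_mem]
    simp only [myA, Set.mem_setOf_eq]
    decide
  · rw [mem_acc_iff _ _ _ eA8, lw_mem]
    simp only [myA, Set.mem_setOf_eq]
    decide
  · rw [mem_acc_iff _ _ _ eA9, lw_mem]
    simp only [myA, Set.mem_setOf_eq]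
    decide
  · rw [mem_acc_iff _ _ _ eA10, lw_mem]
    simp only [myA, Set.mem_setOf_eq]
    decide
lemma eS0 : (strongMerge myA 1 3).eval (List.replicate 0 ()) = {s : {s : Fin 6 // s ≠ 3} | (s:Fin 6) = 0} := by
  rw [show List.replicate 0 () = ([] : List Unit) from rfl, NFA.eval_nil]
  ext t; simp only [strongMerge, myA, tf, Set.mem_setOf_eq]
  revert t; decide
lemma eS1 : (strongMerge myA 1 3).eval (List.replicate 1 ()) = {s : {s : Fin 6 // s ≠ 3} | (s:Fin 6) = 1} := by
  rw [show List.replicate 1 () = List.replicate 0 () ++ [()] from List.replicate_succ',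
    NFA.eval_append_singleton, eS0]
  ext t; simp only [NFA.stepSet, strongMerge, myA, tf, Set.mem_iUnion, Set.mem_setOf_eq]
  revert t; decide
lemma eS2 : (strongMerge myA 1 3).eval (List.replicate 2 ()) = {s : {s : Fin 6 // s ≠ 3} | (s:Fin 6) = 2} := by
  rw [show List.replicate 2 () = List.replicate 1 () ++ [()] from List.replicate_succ',
    NFA.eval_append_singleton, eS1]
  ext t; simp only [NFA.stepSet, strongMerge, myA, tf, Set.mem_iUnion, Set.mem_setOf_eq]
  revert t; decide
lemma eS3 : (strongMerge myA 1 3).eval (List.replicate 3 ()) = {s : {s : Fin 6 // s ≠ 3} | (s:Fin 6) = 1} := by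
  rw [show List.replicate 3 () = List.replicate 2 () ++ [()] from List.replicate_succ',
    NFA.eval_append_singleton, eS2]
  ext t; simp only [NFA.stepSet, strongMerge, myA, tf, Set.mem_iUnion, Set.mem_setOf_eq]
  revert t; decide
lemma eT0 : (strongMerge myA 3 1).eval (List.replicate 0 ()) = {s : {s : Fin 6 // s ≠ 1} | (s:Fin 6) = 0} := by
  rw [show List.replicate 0 () = ([] : List Unit) from rfl, NFA.eval_nil]
  ext t; simp only [strongMerge, myA, tf, Set.mem_setOf_eq]
  revert t; decide
lemma eT1 : (strongMerge myA 3 1).eval (List.replicate 1 ()) = {s : {s : Fin 6 // s ≠ 1} | (s:Fin 6) = 3} := by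
  rw [show List.replicate 1 () = List.replicate 0 () ++ [()] from List.replicate_succ',
    NFA.eval_append_singleton, eT0]
  ext t; simp only [NFA.stepSet, strongMerge, myA, tf, Set.mem_iUnion, Set.mem_setOf_eq]
  revert t; decide
lemma eT2 : (strongMerge myA 3 1).eval (List.replicate 2 ()) = {s : {s : Fin 6 // s ≠ 1} | (s:Fin 6) = 4} := by
  rw [show List.replicate 2 () = List.replicate 1 () ++ [()] from List.replicate_succ',
    NFA.eval_append_singleton, eT1]
  ext t; simp only [NFA.stepSet, strongMerge, myA, tf, Set.mem_iUnion, Set.mem_setOf_eq]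
  revert t; decide
lemma eT3 : (strongMerge myA 3 1).eval (List.replicate 3 ()) = {s : {s : Fin 6 // s ≠ 1} | (s:Fin 6) = 5} := by
  rw [show List.replicate 3 () = List.replicate 2 () ++ [()] from List.replicate_succ',
    NFA.eval_append_singleton, eT2]
  ext t; simp only [NFA.stepSet, strongMerge, myA, tf, Set.mem_iUnion, Set.mem_setOf_eq]
  revert t; decide
lemma eT4 : (strongMerge myA 3 1).eval (List.replicate 4 ()) = {s : {s : Fin 6 // s ≠ 1} | (s:Fin 6) = 3} := by
  rw [show List.replicate 4 () = List.replicate 3 () ++ [()] from List.replicate_succ',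
    NFA.eval_append_singleton, eT3]
  ext t; simp only [NFA.stepSet, strongMerge, myA, tf, Set.mem_iUnion, Set.mem_setOf_eq]
  revert t; decide

lemma notCoverS13 : ¬ IsCoverN (strongMerge myA 1 3) Lw 10 := by
  intro h
  have h2 := (h (List.replicate 3 ()) (by simp)).2 ((lw_mem 3).2 (by decide))
  rw [mem_acc_iff _ _ _ eS3] at h2
  simp only [strongMerge, myA, Set.mem_setOf_eq] at h2
  exact absurd h2 (by decide)

lemma notCoverS31 : ¬ IsCoverN (strongMerge myA 3 1) Lw 10 := by
  intro h
  have h2 := (h (List.replicate 4 ()) (by simp)).2 ((lw_mem 4).2 (by decide))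
  rw [mem_acc_iff _ _ _ eT4] at h2
  simp only [strongMerge, myA, Set.mem_setOf_eq] at h2
  exact absurd h2 (by decide)
lemma w13_acc : List.replicate 7 () ∈ (weakMerge myA 1 3).accepts := by
  have h0 : (⟨0, by decide⟩ : {s : Fin 6 // s ≠ 3}) ∈ (weakMerge myA 1 3).eval (List.replicate 0 ()) := by
    rw [show List.replicate 0 () = ([] : List Unit) from rfl, NFA.eval_nil]
    simp [weakMerge, myA]
  have h1 : (⟨1, by decide⟩ : {s : Fin 6 // s ≠ 3}) ∈ (weakMerge myA 1 3).eval (List.replicate 1 ()) :=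
    mem_eval_succ _ h0 (by simp [weakMerge, myA, tf])
  have h2 : (⟨4, by decide⟩ : {s : Fin 6 // s ≠ 3}) ∈ (weakMerge myA 1 3).eval (List.replicate 2 ()) :=
    mem_eval_succ _ h1 (by simp [weakMerge, myA, tf])
  have h3 : (⟨5, by decide⟩ : {s : Fin 6 // s ≠ 3}) ∈ (weakMerge myA 1 3).eval (List.replicate 3 ()) :=
    mem_eval_succ _ h2 (by simp [weakMerge, myA, tf])
  have h4 : (⟨1, by decide⟩ : {s : Fin 6 // s ≠ 3}) ∈ (weakMerge myA 1 3).eval (List.replicate 4 ()) :=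
    mem_eval_succ _ h3 (by simp [weakMerge, myA, tf])
  have h5 : (⟨2, by decide⟩ : {s : Fin 6 // s ≠ 3}) ∈ (weakMerge myA 1 3).eval (List.replicate 5 ()) :=
    mem_eval_succ _ h4 (by simp [weakMerge, myA, tf])
  have h6 : (⟨1, by decide⟩ : {s : Fin 6 // s ≠ 3}) ∈ (weakMerge myA 1 3).eval (List.replicate 6 ()) :=
    mem_eval_succ _ h5 (by simp [weakMerge, myA, tf])
  have h7 : (⟨2, by decide⟩ : {s : Fin 6 // s ≠ 3}) ∈ (weakMerge myA 1 3).eval (List.replicate 7 ()) :=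
    mem_eval_succ _ h6 (by simp [weakMerge, myA, tf])
  exact ⟨⟨2, by decide⟩, by simp [weakMerge, myA], h7⟩
lemma w31_acc : List.replicate 7 () ∈ (weakMerge myA 3 1).accepts := by
  have h0 : (⟨0, by decide⟩ : {s : Fin 6 // s ≠ 1}) ∈ (weakMerge myA 3 1).eval (List.replicate 0 ()) := by
    rw [show List.replicate 0 () = ([] : List Unit) from rfl, NFA.eval_nil]
    simp [weakMerge, myA]
  have h1 : (⟨3, by decide⟩ : {s : Fin 6 // s ≠ 1}) ∈ (weakMerge myA 3 1).eval (List.replicate 1 ()) :=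
    mem_eval_succ _ h0 (by simp [weakMerge, myA, tf])
  have h2 : (⟨4, by decide⟩ : {s : Fin 6 // s ≠ 1}) ∈ (weakMerge myA 3 1).eval (List.replicate 2 ()) :=
    mem_eval_succ _ h1 (by simp [weakMerge, myA, tf])
  have h3 : (⟨5, by decide⟩ : {s : Fin 6 // s ≠ 1}) ∈ (weakMerge myA 3 1).eval (List.replicate 3 ()) :=
    mem_eval_succ _ h2 (by simp [weakMerge, myA, tf])
  have h4 : (⟨3, by decide⟩ : {s : Fin 6 // s ≠ 1}) ∈ (weakMerge myA 3 1).eval (List.replicate 4 ()) :=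
    mem_eval_succ _ h3 (by simp [weakMerge, myA, tf])
  have h5 : (⟨2, by decide⟩ : {s : Fin 6 // s ≠ 1}) ∈ (weakMerge myA 3 1).eval (List.replicate 5 ()) :=
    mem_eval_succ _ h4 (by simp [weakMerge, myA, tf])
  have h6 : (⟨3, by decide⟩ : {s : Fin 6 // s ≠ 1}) ∈ (weakMerge myA 3 1).eval (List.replicate 6 ()) :=
    mem_eval_succ _ h5 (by simp [weakMerge, myA, tf])
  have h7 : (⟨2, by decide⟩ : {s : Fin 6 // s ≠ 1}) ∈ (weakMerge myA 3 1).eval (List.replicate 7 ()) :=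
    mem_eval_succ _ h6 (by simp [weakMerge, myA, tf])
  exact ⟨⟨2, by decide⟩, by simp [weakMerge, myA], h7⟩

lemma notCoverW13 : ¬ IsCoverN (weakMerge myA 1 3) Lw 10 := by
  intro h
  exact absurd ((h (List.replicate 7 ()) (by simp)).1 w13_acc) (by rw [lw_mem]; decide)

lemma notCoverW31 : ¬ IsCoverN (weakMerge myA 3 1) Lw 10 := by
  intro h
  exact absurd ((h (List.replicate 7 ()) (by simp)).1 w31_acc) (by rw [lw_mem]; decide)

lemma level_eq (s : Fin 6) (h1 : s ∈ myA.eval (List.replicate 1 ())) (h0 : s ≠ 0) :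
    nfaLevel myA s = 1 := by
  refine le_antisymm ?_ ?_
  · exact le_trans (iInf₂_le (f := fun w (_ : w ∈ {w : List Unit | s ∈ myA.eval w}) => (w.length : ℕ∞)) (List.replicate 1 ()) h1) (by simp)
  · refine le_iInf₂ fun w hw => ?_
    simp only [Set.mem_setOf_eq] at hw
    cases w with
    | nil =>
      rw [NFA.eval_nil] at hw
      simp only [myA, Set.mem_setOf_eq] at hw
      exact absurd hw h0
    | cons a t =>
      exact_mod_cast Nat.succ_le_succ (Nat.zero_le _)

lemma level1 : nfaLevel myA 1 = 1 := level_eq 1 (by rw [eA1]; left; rfl) (by decide)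
lemma level3 : nfaLevel myA 3 = 1 := level_eq 3 (by rw [eA1]; right; rfl) (by decide)

lemma lwFinite : Set.Finite (Lw : Set (List Unit)) := by
  apply Set.Finite.subset ((Set.finite_Iic 10).image (fun n => List.replicate n ()))
  intro w hw
  obtain ⟨-, h2, -⟩ := hw
  exact ⟨w.length, h2, (unit_list w).symm⟩

end Witness

/-- there exist an NFA cover automaton `A` for a finite language `L`
and distinct states `p, q` with `level(p), level(q) ≤ l` such that the minimal
words `x_A(p)` and `x_A(q)` reaching them are similar w.r.t. `L`, yet merging
`p` and `q` (weakly or strongly, in either direction) destroys the cover property.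
(Witness: the unary 6-state NFCA for `L_{9,7}` of Figure 5.) -/


theorem similar_minimal_words_not_mergible :
    ∃ (A : NFA Unit (Fin 6)) (L : Language Unit) (l : ℕ) (p q : Fin 6)
      (x y : List Unit),
      Set.Finite (L : Set (List Unit)) ∧ (∀ w ∈ L, List.length w ≤ l) ∧
      IsCoverN A L l ∧ p ≠ q ∧
      nfaLevel A p ≤ (l : ℕ∞) ∧ nfaLevel A q ≤ (l : ℕ∞) ∧
      p ∈ A.eval x ∧ (x.length : ℕ∞) = nfaLevel A p ∧
      q ∈ A.eval y ∧ (y.length : ℕ∞) = nfaLevel A q ∧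
      WordSim L l x y ∧
      ¬ IsCoverN (weakMerge A p q) L l ∧
      ¬ IsCoverN (strongMerge A p q) L l ∧
      ¬ IsCoverN (weakMerge A q p) L l ∧
      ¬ IsCoverN (strongMerge A q p) L l := by
  refine ⟨myA, Lw, 10, 1, 3, [()], [()], lwFinite, fun w hw => hw.2.1, coverA, by decide,
    ?_, ?_, ?_, ?_, ?_, ?_, fun w _ => Iff.rfl, notCoverW13, notCoverS13, notCoverW31, notCoverS31⟩
  · rw [level1]; norm_num
  · rw [level3]; norm_num
  · rw [show ([()] : List Unit) = List.replicate 1 () from rfl, eA1]; left; rfl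
  · rw [level1]; rfl
  · rw [show ([()] : List Unit) = List.replicate 1 () from rfl, eA1]; right; rfl
  · rw [level3]; rfl
end
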